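/- If the dichotomy spectrum Σ of a linear random dynamical system (θ, Φ) on ℝ^d is bounded, i.e., Σ ⊆ [c₁, c₂] for some real numbers c₁ ≤ c₂, then Φ satisfies the integrability condition of the Multiplicative Ergodic Theorem: the functions ω ↦ ln⁺( sup_{t ∈ [0,1]} ‖Φ(t, ω)‖ ) and ω ↦ ln⁺( sup_{t ∈ [0,1]} ‖Φ(t, ω)⁻¹‖ ) are in L¹(ℙ). -/

import Mathlib

open MeasureTheory Filter

noncomputable section

/-- A linear random dynamical system `(θ, Φ)` on `ℝ^d` over the probability space `(Ω, 𝓕, ℙ)`: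
`θ` is a measure-preserving measurable dynamical system on `Ω`, and `Φ` is a measurable
cocycle over `θ` taking values in the invertible continuous linear maps of `ℝ^d`. -/
structure LinRDS {Ω : Type*} [MeasurableSpace Ω] (ℙ : Measure Ω) (d : ℕ) where
  θ : ℝ → Ω → Ω
  Φ : ℝ → Ω → EuclideanSpace ℝ (Fin d) →L[ℝ] EuclideanSpace ℝ (Fin d)
  θ_meas : Measurable fun p : ℝ × Ω => θ p.1 p.2
  θ_zero : ∀ ω, θ 0 ω = ω
  θ_add : ∀ t s ω, θ (t + s) ω = θ t (θ s ω)
  θ_pres : ∀ t, MeasurePreserving (θ t) ℙ ℙ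
  Φ_meas : ∀ x, Measurable fun p : ℝ × Ω => Φ p.1 p.2 x
  Φ_zero : ∀ ω, Φ 0 ω = 1
  Φ_cocycle : ∀ t s ω, Φ (t + s) ω = Φ t (θ s ω) * Φ s ω
  Φ_isUnit : ∀ t ω, IsUnit (Φ t ω)

variable {Ω : Type*} [MeasurableSpace Ω] {ℙ : Measure Ω} {d : ℕ}

/-- The base of the linear random dynamical system is ergodic. -/
def LinRDS.IsErgodic (S : LinRDS ℙ d) : Prop :=
  ∀ A : Set Ω, MeasurableSet A → (∀ t, S.θ t ⁻¹' A = A) → ℙ A = 0 ∨ ℙ A = 1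

/-- An invariant projector of a linear random dynamical system. -/
def LinRDS.InvProjector (S : LinRDS ℙ d)
    (P : Ω → EuclideanSpace ℝ (Fin d) →L[ℝ] EuclideanSpace ℝ (Fin d)) : Prop :=
  (∀ x, Measurable fun ω => P ω x) ∧ (∀ ω, P ω * P ω = P ω) ∧
    ∀ t ω, P (S.θ t ω) * S.Φ t ω = S.Φ t ω * P ω

/-- `(θ, Φ)` admits an exponential dichotomy with growth rate `γ` and invariant projector `P`. -/
def LinRDS.IsED (S : LinRDS ℙ d) (γ : ℝ)
    (P : Ω → EuclideanSpace ℝ (Fin d) →L[ℝ] EuclideanSpace ℝ (Fin d)) : Prop :=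
  S.InvProjector P ∧ ∃ a > (0:ℝ), ∃ K ≥ (1:ℝ), ∀ᵐ ω ∂ℙ,
    (∀ t : ℝ, 0 ≤ t → ‖S.Φ t ω * P ω‖ ≤ K * Real.exp ((γ - a) * t)) ∧
    (∀ t : ℝ, t ≤ 0 → ‖S.Φ t ω * (1 - P ω)‖ ≤ K * Real.exp ((γ + a) * t))

/-- `(θ, Φ)` admits an exponential dichotomy with real growth rate `γ`. -/
def LinRDS.AdmitsED (S : LinRDS ℙ d) (γ : ℝ) : Prop :=
  ∃ P, S.IsED γ P

/-- `(θ, Φ)` admits an exponential dichotomy with extended-real growth rate `γ`; for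
`γ = ±∞` this means an exponential dichotomy with some real growth rate whose projector
is a.s. the identity (resp. a.s. zero). -/
def LinRDS.AdmitsEDE (S : LinRDS ℙ d) (γ : EReal) : Prop :=
  (∃ g : ℝ, γ = (g : EReal) ∧ S.AdmitsED g) ∨
  (γ = ⊤ ∧ ∃ g : ℝ, ∃ P, S.IsED g P ∧ ∀ᵐ ω ∂ℙ, P ω = 1) ∨
  (γ = ⊥ ∧ ∃ g : ℝ, ∃ P, S.IsED g P ∧ ∀ᵐ ω ∂ℙ, P ω = 0)

/-- The dichotomy spectrum of `(θ, Φ)`, a subset of the extended real line. -/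
def LinRDS.spectrum (S : LinRDS ℙ d) : Set EReal :=
  {γ | ¬ S.AdmitsEDE γ}

/-- The rank of a continuous linear map on `ℝ^d`. -/
def clmRank (P : EuclideanSpace ℝ (Fin d) →L[ℝ] EuclideanSpace ℝ (Fin d)) : ℕ :=
  Module.finrank ℝ (LinearMap.range
    (P : EuclideanSpace ℝ (Fin d) →ₗ[ℝ] EuclideanSpace ℝ (Fin d)))

/-- `ln⁺ x = max {0, ln x}`. -/
def posLog (x : ℝ) : ℝ := max (Real.log x) 0

/-! ### Auxiliary lemmas -/

/-- A continuous function on `[0,1]` has the same supremum over `[0,1]` as over the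
rationals of `[0,1]`. -/
lemma ciSup_Icc_rat_aux (g : ℝ → ℝ) (hg : Continuous g) :
    ⨆ t : Set.Icc (0:ℝ) 1, g t = ⨆ q : {q : ℚ // (q:ℝ) ∈ Set.Icc (0:ℝ) 1}, g q := by
  have hne : Nonempty {q : ℚ // (q:ℝ) ∈ Set.Icc (0:ℝ) 1} := ⟨⟨0, by norm_num⟩⟩
  have hbdd : BddAbove (Set.range fun t : Set.Icc (0:ℝ) 1 => g t) := by
    have := (isCompact_Icc (a := (0:ℝ)) (b := 1)).bddAbove_image hg.continuousOn
    rwa [Set.image_eq_range] at this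
  have hbddq : BddAbove (Set.range fun q : {q : ℚ // (q:ℝ) ∈ Set.Icc (0:ℝ) 1} => g q) := by
    obtain ⟨M, hM⟩ := hbdd
    exact ⟨M, by rintro x ⟨q, rfl⟩; exact hM ⟨⟨(q:ℝ), q.2⟩, rfl⟩⟩
  apply le_antisymm
  · apply ciSup_le
    rintro ⟨t, ht⟩
    by_cases h1 : t = 1
    · subst h1
      simpa using le_ciSup hbddq ⟨1, by norm_num⟩
    · have ht1 : t < 1 := lt_of_le_of_ne ht.2 h1
      refine le_of_forall_pos_le_add ?_
      intro ε hε
      obtain ⟨δ, hδ, hδ'⟩ := Metric.continuous_iff.mp hg t ε hε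
      obtain ⟨q, hq1, hq2⟩ := exists_rat_btwn (lt_min ht1 (lt_add_of_pos_right t hδ))
      have hq2a : (q:ℝ) < 1 := lt_of_lt_of_le hq2 (min_le_left _ _)
      have hq2b : (q:ℝ) < t + δ := lt_of_lt_of_le hq2 (min_le_right _ _)
      have hqmem : (q:ℝ) ∈ Set.Icc (0:ℝ) 1 := ⟨le_trans ht.1 hq1.le, hq2a.le⟩
      have hdist : dist (q:ℝ) t < δ := by
        rw [Real.dist_eq, abs_of_pos (by linarith)]; linarith
      have h3 := hδ' _ hdist
      rw [Real.dist_eq] at h3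
      have h4 := (abs_lt.mp h3).1
      have : g t ≤ g q + ε := by linarith
      exact this.trans (add_le_add_left (le_ciSup hbddq ⟨q, hqmem⟩) ε)
  · apply ciSup_le
    rintro ⟨q, hq⟩
    exact le_ciSup hbdd ⟨(q:ℝ), hq⟩

/-- A map into the continuous linear endomorphisms of a Euclidean space is measurable as
soon as all its pointwise evaluations are measurable. -/
lemma measurable_clm_aux {Ω : Type*} [MeasurableSpace Ω] {d : ℕ}
    (f : Ω → EuclideanSpace ℝ (Fin d) →L[ℝ] EuclideanSpace ℝ (Fin d))
    (hf : ∀ x, Measurable fun ω => f ω x) :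
    Measurable f := by
  classical
  set b := EuclideanSpace.basisFun (Fin d) ℝ
  let L : (EuclideanSpace ℝ (Fin d) →L[ℝ] EuclideanSpace ℝ (Fin d)) →ₗ[ℝ]
      (Fin d → EuclideanSpace ℝ (Fin d)) :=
    LinearMap.pi fun i => (ContinuousLinearMap.apply ℝ (EuclideanSpace ℝ (Fin d)) (b i)).toLinearMap
  have hinj : Function.Injective L := by
    intro A B h
    apply ContinuousLinearMap.coe_injective
    apply Module.Basis.ext b.toBasis
    intro i
    rw [OrthonormalBasis.coe_toBasis]
    exact congrFun h i
  have hemb : MeasurableEmbedding L :=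
    (LinearMap.isClosedEmbedding_of_injective (LinearMap.ker_eq_bot.mpr hinj)).measurableEmbedding
  have : Measurable (L ∘ f) := measurable_pi_lambda _ fun i => hf (b i)
  exact hemb.measurable_comp_iff.mp this

/-- Boundedness a.e. plus measurability gives integrability of `posLog ∘ F`. -/
lemma integrable_posLog_aux {Ω : Type*} [MeasurableSpace Ω] {ℙ : Measure Ω}
    [IsProbabilityMeasure ℙ] {F : Ω → ℝ} (hF : Measurable F) (h0 : ∀ ω, 0 ≤ F ω)
    {M : ℝ} (hM : ∀ᵐ ω ∂ℙ, F ω ≤ M) :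
    Integrable (fun ω => posLog (F ω)) ℙ := by
  have hmeas : Measurable fun ω => posLog (F ω) :=
    (Real.measurable_log.comp hF).max measurable_const
  apply Integrable.mono' (integrable_const (posLog M)) hmeas.aestronglyMeasurable
  filter_upwards [hM] with ω h
  rw [Real.norm_eq_abs, abs_of_nonneg (le_max_right _ _)]
  unfold posLog
  apply max_le _ (le_max_right _ _)
  rcases eq_or_lt_of_le (h0 ω) with h' | h'
  · rw [← h', Real.log_zero]; exact le_max_right _ _
  · exact le_max_of_le_left (Real.log_le_log h' h)

/-- The `Ring.inverse` of the cocycle is given by the cocycle along the reversed time. -/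
lemma LinRDS.inverse_eq (S : LinRDS ℙ d) (t : ℝ) (ω : Ω) :
    Ring.inverse (S.Φ t ω) = S.Φ (-t) (S.θ t ω) := by
  have h1 : S.Φ (-t) (S.θ t ω) * S.Φ t ω = 1 := by
    have := S.Φ_cocycle (-t) t ω
    rw [neg_add_cancel, S.Φ_zero] at this
    exact this.symm
  obtain ⟨u, hu⟩ := S.Φ_isUnit t ω
  rw [← hu, Ring.inverse_unit]
  exact Units.inv_eq_of_mul_eq_one_left (by rw [hu]; exact h1)

/-- If the dichotomy spectrum of `(θ, Φ)` is bounded, i.e. contained in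
`[c₁, c₂]` for some reals `c₁ ≤ c₂`, then `Φ` satisfies the integrability condition of the
Multiplicative Ergodic Theorem. -/
theorem integrability_of_bounded_spectrum
    {Ω : Type*} [MeasurableSpace Ω] {ℙ : Measure Ω} [IsProbabilityMeasure ℙ] {d : ℕ}
    (S : LinRDS ℙ d)
    (hcont : ∀ ω, Continuous fun t : ℝ => S.Φ t ω)
    (c₁ c₂ : ℝ) (hc : c₁ ≤ c₂)
    (hbdd : ∀ γ ∈ S.spectrum, (c₁ : EReal) ≤ γ ∧ γ ≤ (c₂ : EReal)) :
    Integrable (fun ω => posLog (⨆ t : Set.Icc (0:ℝ) 1, ‖S.Φ t ω‖)) ℙ ∧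
    Integrable (fun ω => posLog (⨆ t : Set.Icc (0:ℝ) 1, ‖Ring.inverse (S.Φ t ω)‖)) ℙ := by
  classical
  have hne : Nonempty {q : ℚ // (q:ℝ) ∈ Set.Icc (0:ℝ) 1} := ⟨⟨0, by norm_num⟩⟩
  -- the extremes are not in the spectrum
  have htop : S.AdmitsEDE ⊤ := by
    by_contra h
    exact absurd (hbdd ⊤ h).2 (by simp)
  have hbot : S.AdmitsEDE ⊥ := by
    by_contra h
    exact absurd (hbdd ⊥ h).1 (by simp)
  obtain ⟨g₁, P₁, hED₁, hP₁⟩ : ∃ g P, S.IsED g P ∧ ∀ᵐ ω ∂ℙ, P ω = 1 := by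
    rcases htop with ⟨g, hg, _⟩ | ⟨_, h⟩ | ⟨h, _⟩
    · exact absurd hg (by simp)
    · exact h
    · exact absurd h (by simp)
  obtain ⟨g₂, P₂, hED₂, hP₂⟩ : ∃ g P, S.IsED g P ∧ ∀ᵐ ω ∂ℙ, P ω = 0 := by
    rcases hbot with ⟨g, hg, _⟩ | ⟨h, _⟩ | ⟨_, h⟩
    · exact absurd hg (by simp)
    · exact absurd h (by simp)
    · exact h
  obtain ⟨-, a₁, ha₁, K₁, hK₁, hae₁⟩ := hED₁
  obtain ⟨-, a₂, ha₂, K₂, hK₂, hae₂⟩ := hED₂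
  set M₁ := K₁ * Real.exp |g₁ - a₁| with hM₁
  set M₂ := K₂ * Real.exp |g₂ + a₂| with hM₂
  -- continuity of the inverse cocycle in time
  have hcontinv : ∀ ω, Continuous fun t : ℝ => Ring.inverse (S.Φ t ω) := by
    intro ω
    rw [continuous_iff_continuousAt]
    intro t
    obtain ⟨u, hu⟩ := S.Φ_isUnit t ω
    exact ContinuousAt.comp (hu ▸ NormedRing.inverse_continuousAt u) (hcont ω).continuousAt
  -- forward bound
  have hfwd : ∀ᵐ ω ∂ℙ, ∀ t ∈ Set.Icc (0:ℝ) 1, ‖S.Φ t ω‖ ≤ M₁ := by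
    filter_upwards [hae₁, hP₁] with ω h hp
    intro t ht
    have h1 := h.1 t ht.1
    rw [hp, mul_one] at h1
    refine h1.trans ?_
    have hle : (g₁ - a₁) * t ≤ |g₁ - a₁| := by
      calc (g₁ - a₁) * t ≤ |(g₁ - a₁) * t| := le_abs_self _
        _ = |g₁ - a₁| * |t| := abs_mul _ _
        _ ≤ |g₁ - a₁| * 1 := by
            apply mul_le_mul_of_nonneg_left _ (abs_nonneg _)
            rw [abs_of_nonneg ht.1]; exact ht.2
        _ = |g₁ - a₁| := mul_one _
    exact mul_le_mul_of_nonneg_left (Real.exp_le_exp.mpr hle) (le_trans zero_le_one hK₁)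
  -- backward bound
  have hbwd : ∀ᵐ ω ∂ℙ, ∀ t ∈ Set.Icc (-1:ℝ) 0, ‖S.Φ t ω‖ ≤ M₂ := by
    filter_upwards [hae₂, hP₂] with ω h hp
    intro t ht
    have h1 := h.2 t ht.2
    rw [hp, sub_zero, mul_one] at h1
    refine h1.trans ?_
    have hle : (g₂ + a₂) * t ≤ |g₂ + a₂| := by
      calc (g₂ + a₂) * t ≤ |(g₂ + a₂) * t| := le_abs_self _
        _ = |g₂ + a₂| * |t| := abs_mul _ _
        _ ≤ |g₂ + a₂| * 1 := by
            apply mul_le_mul_of_nonneg_left _ (abs_nonneg _)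
            rw [abs_le]; exact ⟨ht.1, ht.2.trans zero_le_one⟩
        _ = |g₂ + a₂| := mul_one _
    exact mul_le_mul_of_nonneg_left (Real.exp_le_exp.mpr hle) (le_trans zero_le_one hK₂)
  -- bound on the inverse at rational times
  have hbwdq : ∀ᵐ ω ∂ℙ, ∀ q : {q : ℚ // (q:ℝ) ∈ Set.Icc (0:ℝ) 1},
      ‖Ring.inverse (S.Φ (q:ℝ) ω)‖ ≤ M₂ := by
    rw [MeasureTheory.ae_all_iff]
    intro q
    have hmp : ∀ᵐ ω ∂ℙ, ∀ t ∈ Set.Icc (-1:ℝ) 0, ‖S.Φ t (S.θ (q:ℝ) ω)‖ ≤ M₂ :=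
      (S.θ_pres (q:ℝ)).quasiMeasurePreserving.tendsto_ae.eventually hbwd
    filter_upwards [hmp] with ω h
    rw [S.inverse_eq]
    exact h _ ⟨by simpa using q.2.2, by simpa using q.2.1⟩
  -- measurability of the two suprema
  have hΦmeas : ∀ t : ℝ, Measurable fun ω => S.Φ t ω := fun t =>
    measurable_clm_aux _ fun x => (S.Φ_meas x).comp measurable_prodMk_left
  have hm1 : Measurable fun ω => ⨆ t : Set.Icc (0:ℝ) 1, ‖S.Φ t ω‖ := by
    have heq : (fun ω => ⨆ t : Set.Icc (0:ℝ) 1, ‖S.Φ t ω‖)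
        = fun ω => ⨆ q : {q : ℚ // (q:ℝ) ∈ Set.Icc (0:ℝ) 1}, ‖S.Φ (q:ℝ) ω‖ :=
      funext fun ω => ciSup_Icc_rat_aux _ (hcont ω).norm
    rw [heq]
    exact Measurable.iSup fun q => (hΦmeas (q:ℝ)).norm
  have hm2 : Measurable fun ω => ⨆ t : Set.Icc (0:ℝ) 1, ‖Ring.inverse (S.Φ t ω)‖ := by
    have heq : (fun ω => ⨆ t : Set.Icc (0:ℝ) 1, ‖Ring.inverse (S.Φ t ω)‖)
        = fun ω => ⨆ q : {q : ℚ // (q:ℝ) ∈ Set.Icc (0:ℝ) 1}, ‖Ring.inverse (S.Φ (q:ℝ) ω)‖ :=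
      funext fun ω => ciSup_Icc_rat_aux _ (hcontinv ω).norm
    rw [heq]
    refine Measurable.iSup fun q => ?_
    have heq2 : (fun ω => ‖Ring.inverse (S.Φ (q:ℝ) ω)‖)
        = fun ω => ‖S.Φ (-(q:ℝ)) (S.θ (q:ℝ) ω)‖ :=
      funext fun ω => by rw [S.inverse_eq]
    rw [heq2]
    exact ((hΦmeas (-(q:ℝ))).comp (S.θ_pres (q:ℝ)).measurable).norm
  -- nonnegativity of the suprema
  have hbdd1 : ∀ ω, BddAbove (Set.range fun t : Set.Icc (0:ℝ) 1 => ‖S.Φ t ω‖) := by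
    intro ω
    have := (isCompact_Icc (a := (0:ℝ)) (b := 1)).bddAbove_image (hcont ω).norm.continuousOn
    rwa [Set.image_eq_range] at this
  have hbdd2 : ∀ ω, BddAbove (Set.range fun t : Set.Icc (0:ℝ) 1 => ‖Ring.inverse (S.Φ t ω)‖) := by
    intro ω
    have := (isCompact_Icc (a := (0:ℝ)) (b := 1)).bddAbove_image (hcontinv ω).norm.continuousOn
    rwa [Set.image_eq_range] at this
  have h01 : ∀ ω, (0:ℝ) ≤ ⨆ t : Set.Icc (0:ℝ) 1, ‖S.Φ t ω‖ := fun ω =>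
    le_trans (norm_nonneg _) (le_ciSup (hbdd1 ω) ⟨0, by norm_num⟩)
  have h02 : ∀ ω, (0:ℝ) ≤ ⨆ t : Set.Icc (0:ℝ) 1, ‖Ring.inverse (S.Φ t ω)‖ := fun ω =>
    le_trans (norm_nonneg _) (le_ciSup (hbdd2 ω) ⟨0, by norm_num⟩)
  constructor
  · refine integrable_posLog_aux hm1 h01 (M := M₁) ?_
    filter_upwards [hfwd] with ω h
    exact ciSup_le fun t => h t t.2
  · refine integrable_posLog_aux hm2 h02 (M := M₂) ?_
    filter_upwards [hbwdq] with ω h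
    rw [ciSup_Icc_rat_aux _ (hcontinv ω).norm]
    exact ciSup_le fun q => h q

end
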